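/- Let ζ, η ∈ ℂ and let S₁ ≠ S₂ be the two roots of S² − ηS − ζ − 2 = 0. For l = 1,2 let φ_l : ℤ → ℂ satisfy φ_l(j+1) = S_l·φ_l(j) − φ_l(j−1), φ_l(0)=0, φ_l(1)=1. Then the basic Tetranacci polynomial 𝒯_{−2} (the solution of the symmetric Tetranacci recursion with 𝒯_{−2}(−2)=1 and 𝒯_{−2}(−1)=𝒯_{−2}(0)=𝒯_{−2}(1)=0) is given by 𝒯_{−2}(j) = (φ₂(j) − φ₁(j))/(S₁ − S₂) for all j ∈ ℤ. -/

import Mathlib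

theorem Tm2_fibonacci_decomposition (ζ η S₁ S₂ : ℂ)
    (hS₁ : S₁ ^ 2 - η * S₁ - ζ - 2 = 0) (hS₂ : S₂ ^ 2 - η * S₂ - ζ - 2 = 0)
    (hne : S₁ ≠ S₂)
    (φ₁ φ₂ : ℤ → ℂ)
    (hrec₁ : ∀ j : ℤ, φ₁ (j + 1) = S₁ * φ₁ j - φ₁ (j - 1))
    (h10 : φ₁ 0 = 0) (h11 : φ₁ 1 = 1)
    (hrec₂ : ∀ j : ℤ, φ₂ (j + 1) = S₂ * φ₂ j - φ₂ (j - 1))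
    (h20 : φ₂ 0 = 0) (h21 : φ₂ 1 = 1)
    (Tm2 : ℤ → ℂ)
    (hTrec : ∀ j : ℤ, Tm2 (j + 2) = ζ * Tm2 j - Tm2 (j - 2) + η * (Tm2 (j + 1) + Tm2 (j - 1)))
    (hTinit : Tm2 (-2) = 1 ∧ Tm2 (-1) = 0 ∧ Tm2 0 = 0 ∧ Tm2 1 = 0) :
    ∀ j : ℤ, Tm2 j = (φ₂ j - φ₁ j) / (S₁ - S₂) := by
  obtain ⟨hT2, hT1, hT0, hTp1⟩ := hTinit
  have hd : S₁ - S₂ ≠ 0 := sub_ne_zero.mpr hne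
  -- values of φ at -1 and -2
  have h1m1 : φ₁ (-1) = -1 := by
    have := hrec₁ 0; norm_num [h10, h11] at this; linear_combination this
  have h2m1 : φ₂ (-1) = -1 := by
    have := hrec₂ 0; norm_num [h20, h21] at this; linear_combination this
  have h1m2 : φ₁ (-2) = -S₁ := by
    have := hrec₁ (-1)
    norm_num [h10, h1m1] at this
    linear_combination this
  have h2m2 : φ₂ (-2) = -S₂ := by
    have := hrec₂ (-1)
    norm_num [h20, h2m1] at this
    linear_combination this
  -- each φ satisfies the four-term recursion
  have R1 : ∀ j : ℤ, φ₁ (j + 2) = ζ * φ₁ j - φ₁ (j - 2) + η * (φ₁ (j + 1) + φ₁ (j - 1)) := by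
    intro j
    have e1 := hrec₁ (j + 1)
    have e0 := hrec₁ j
    have em := hrec₁ (j - 1)
    simp only [show j + 1 + 1 = j + 2 from by ring, show j + 1 - 1 = j from by ring,
      show j - 1 + 1 = j from by ring, show j - 1 - 1 = j - 2 from by ring] at e1 em
    linear_combination e1 + (S₁ - η) * e0 + em + (φ₁ j) * hS₁
  have R2 : ∀ j : ℤ, φ₂ (j + 2) = ζ * φ₂ j - φ₂ (j - 2) + η * (φ₂ (j + 1) + φ₂ (j - 1)) := by
    intro j
    have e1 := hrec₂ (j + 1)
    have e0 := hrec₂ j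
    have em := hrec₂ (j - 1)
    simp only [show j + 1 + 1 = j + 2 from by ring, show j + 1 - 1 = j from by ring,
      show j - 1 + 1 = j from by ring, show j - 1 - 1 = j - 2 from by ring] at e1 em
    linear_combination e1 + (S₂ - η) * e0 + em + (φ₂ j) * hS₂
  -- the multiplied-out goal
  set G : ℤ → Prop := fun j => (S₁ - S₂) * Tm2 j = φ₂ j - φ₁ j with hG
  have Gm2 : G (-2) := by simp only [hG]; rw [hT2, h1m2, h2m2]; ring
  have Gm1 : G (-1) := by simp only [hG]; rw [hT1, h1m1, h2m1]; ring
  have G0 : G 0 := by simp only [hG]; rw [hT0, h10, h20]; ring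
  have G1 : G 1 := by simp only [hG]; rw [hTp1, h11, h21]; ring
  have step : ∀ j : ℤ, G (j - 2) → G (j - 1) → G j → G (j + 1) → G (j + 2) := by
    intro j a b c d
    simp only [hG] at a b c d ⊢
    linear_combination (S₁ - S₂) * hTrec j + ζ * c + η * d + η * b - a - R2 j + R1 j
  have stepdown : ∀ j : ℤ, G (j - 1) → G j → G (j + 1) → G (j + 2) → G (j - 2) := by
    intro j b c d e
    simp only [hG] at b c d e ⊢
    linear_combination (S₁ - S₂) * hTrec j + ζ * c + η * d + η * b - e - R2 j + R1 j
  have key : ∀ j : ℤ, G (j - 1) ∧ G j ∧ G (j + 1) ∧ G (j + 2) := by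
    intro j
    induction j using Int.induction_on with
    | zero =>
      have g2 : G 2 := by
        have := step 0 (by norm_num; exact Gm2) (by norm_num; exact Gm1) G0
          (by norm_num; exact G1)
        norm_num at this; exact this
      refine ⟨by norm_num; exact Gm1, G0, by norm_num; exact G1, by norm_num; exact g2⟩
    | succ i ih =>
      obtain ⟨a, b, c, d⟩ := ih
      have e : G ((i : ℤ) + 3) := by
        have := step ((i : ℤ) + 1)
          (by rw [show (i : ℤ) + 1 - 2 = (i : ℤ) - 1 from by ring]; exact a)
          (by rw [show (i : ℤ) + 1 - 1 = (i : ℤ) from by ring]; exact b)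
          c d
        rwa [show (i : ℤ) + 1 + 2 = (i : ℤ) + 3 from by ring] at this
      refine ⟨?_, c, ?_, ?_⟩
      · rw [show (i : ℤ) + 1 - 1 = (i : ℤ) from by ring]; exact b
      · rw [show (i : ℤ) + 1 + 1 = (i : ℤ) + 2 from by ring]; exact d
      · rw [show (i : ℤ) + 1 + 2 = (i : ℤ) + 3 from by ring]; exact e
    | pred i ih =>
      obtain ⟨a, b, c, d⟩ := ih
      have e : G (-(i : ℤ) - 2) := by
        have := stepdown (-(i : ℤ)) a b c d
        rwa [show -(i : ℤ) - 2 = -(i : ℤ) - 2 from rfl] at this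
      refine ⟨?_, ?_, ?_, ?_⟩
      · rw [show -(i : ℤ) - 1 - 1 = -(i : ℤ) - 2 from by ring]; exact e
      · exact a
      · rw [show -(i : ℤ) - 1 + 1 = -(i : ℤ) from by ring]; exact b
      · rw [show -(i : ℤ) - 1 + 2 = -(i : ℤ) + 1 from by ring]; exact c
  intro j
  rw [eq_div_iff hd]
  have := (key j).2.1
  simp only [hG] at this
  linear_combination this
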